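/- Let (X,+) be an Abelian Polish group and let I be a proper translation-invariant σ-ideal on X with Borel base containing all singletons. Then the following are equivalent: (i) I has the Very Weak Smital Property; (ii) I is maximal among proper translation-invariant σ-ideals on X with Borel base, i.e. for every proper translation-invariant σ-ideal J on X with Borel base, I ⊆ J implies I = J. -/

import Mathlib

open scoped Pointwise

/-- A proper translation-invariant σ-ideal with Borel base containing all singletons. -/
def IsMaxCandidate {X : Type*} [AddCommGroup X] [MeasurableSpace X]
    (I : Set (Set X)) : Prop :=
  (∀ x : X, {x} ∈ I) ∧
  (∀ A ∈ I, ∀ B : Set X, B ⊆ A → B ∈ I) ∧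
  (∀ f : ℕ → Set X, (∀ n, f n ∈ I) → (⋃ n, f n) ∈ I) ∧
  (∀ A ∈ I, ∃ B : Set X, MeasurableSet B ∧ A ⊆ B ∧ B ∈ I) ∧
  (Set.univ ∉ I) ∧
  (∀ A ∈ I, ∀ x : X, (fun a => x + a) '' A ∈ I)

section Aux

variable {X : Type*} [TopologicalSpace X] [AddCommGroup X]
    [IsTopologicalAddGroup X] [MeasurableSpace X] [BorelSpace X]

lemma aux_image_add_measurable (x : X) {A : Set X} (hA : MeasurableSet A) :
    MeasurableSet ((fun a => x + a) '' A) := by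
  have : (fun a => x + a) '' A = (fun a => -x + a) ⁻¹' A := Set.image_add_left
  rw [this]
  exact hA.preimage (measurable_const_add _)

set_option linter.unusedSectionVars false in
lemma aux_add_eq_iUnion {D B : Set X} (hD : D.Countable) (hne : D.Nonempty) :
    ∃ f : ℕ → X, D + B = ⋃ n, (fun a => f n + a) '' B := by
  obtain ⟨f, hf⟩ := hD.exists_eq_range hne
  refine ⟨f, ?_⟩
  ext y
  simp only [Set.mem_add, Set.mem_iUnion, Set.mem_image, hf, Set.mem_range]
  constructor
  · rintro ⟨x, ⟨n, rfl⟩, b, hb, rfl⟩; exact ⟨n, b, hb, rfl⟩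
  · rintro ⟨n, b, hb, rfl⟩; exact ⟨f n, ⟨n, rfl⟩, b, hb, rfl⟩

lemma aux_add_measurable {D B : Set X} (hD : D.Countable) (hB : MeasurableSet B) :
    MeasurableSet (D + B) := by
  rcases D.eq_empty_or_nonempty with rfl | hne
  · rw [Set.empty_add]; exact MeasurableSet.empty
  · obtain ⟨f, hf⟩ := aux_add_eq_iUnion (B := B) hD hne
    rw [hf]
    exact MeasurableSet.iUnion fun n => aux_image_add_measurable _ hB

set_option linter.unusedSectionVars false in
lemma aux_image_add_add (x : X) (D B : Set X) :
    (fun a => x + a) '' (D + B) = ((fun a => x + a) '' D) + B := by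
  rw [← Set.singleton_add, ← Set.singleton_add, add_assoc]

end Aux

/-- for a proper translation-invariant σ-ideal `I` with Borel base, the
Very Weak Smital Property is equivalent to maximality among proper translation-invariant
σ-ideals with Borel base. -/
theorem vwsp_iff_maximal
    {X : Type*} [TopologicalSpace X] [PolishSpace X] [AddCommGroup X]
    [IsTopologicalAddGroup X] [MeasurableSpace X] [BorelSpace X]
    (I : Set (Set X)) (hI : IsMaxCandidate I) :
    (∀ B : Set X, MeasurableSet B → B ∉ I →
      ∃ D : Set X, D.Countable ∧ (D + B)ᶜ ∈ I) ↔
    (∀ J : Set (Set X), IsMaxCandidate J → I ⊆ J → I = J) := by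
  obtain ⟨hsing, hsub, hunion, hbase, hproper, htrans⟩ := hI
  have hempty : (∅ : Set X) ∈ I := hsub {0} (hsing 0) ∅ (Set.empty_subset _)
  constructor
  · -- VWSP → maximality
    intro hvwsp J hJ hIJ
    obtain ⟨hsingJ, hsubJ, hunionJ, hbaseJ, hproperJ, htransJ⟩ := hJ
    refine Set.Subset.antisymm hIJ ?_
    intro A hA
    by_contra hAI
    obtain ⟨B, hBmeas, hAB, hBJ⟩ := hbaseJ A hA
    have hBI : B ∉ I := fun hB => hAI (hsub B hB A hAB)
    obtain ⟨D, hDc, hDco⟩ := hvwsp B hBmeas hBI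
    have hDB : D + B ∈ J := by
      rcases D.eq_empty_or_nonempty with rfl | hne
      · rw [Set.empty_add]
        exact hsubJ {0} (hsingJ 0) ∅ (Set.empty_subset _)
      · obtain ⟨f, hf⟩ := aux_add_eq_iUnion (B := B) hDc hne
        rw [hf]
        exact hunionJ _ fun n => htransJ B hBJ (f n)
    have hco : (D + B)ᶜ ∈ J := hIJ hDco
    have : Set.univ ∈ J := by
      have hu : (⋃ n : ℕ, if n = 0 then D + B else (D + B)ᶜ) ∈ J := by
        refine hunionJ _ fun n => ?_
        by_cases h : n = 0 <;> simp [h, hDB, hco]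
      refine hsubJ _ hu Set.univ fun x _ => ?_
      by_cases hx : x ∈ D + B
      · exact Set.mem_iUnion.2 ⟨0, by simp [hx]⟩
      · exact Set.mem_iUnion.2 ⟨1, by simp [hx]⟩
    exact hproperJ this
  · -- maximality → VWSP
    intro hmax B hBmeas hBI
    by_contra hno
    push_neg at hno
    have hBne : B.Nonempty := by
      rcases B.eq_empty_or_nonempty with rfl | h
      · exact absurd hempty hBI
      · exact h
    obtain ⟨b, hb⟩ := hBne
    set J : Set (Set X) := {A | ∃ D : Set X, D.Countable ∧ A \ (D + B) ∈ I} with hJdef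
    have hIJ : I ⊆ J := by
      intro A hA
      exact ⟨∅, Set.countable_empty, by
        rw [Set.empty_add, Set.diff_empty]; exact hA⟩
    have hJcand : IsMaxCandidate J := by
      refine ⟨?_, ?_, ?_, ?_, ?_, ?_⟩
      · -- singletons
        intro x
        refine ⟨{x - b}, Set.countable_singleton _, ?_⟩
        have : x ∈ ({x - b} : Set X) + B :=
          Set.mem_add.2 ⟨x - b, rfl, b, hb, by abel⟩
        have h0 : ({x} : Set X) \ ({x - b} + B) = ∅ := by
          rw [Set.diff_eq_empty]; exact Set.singleton_subset_iff.2 this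
        rw [h0]; exact hempty
      · -- subsets
        rintro A ⟨D, hDc, hAD⟩ C hCA
        exact ⟨D, hDc, hsub _ hAD _ (Set.diff_subset_diff_left hCA)⟩
      · -- countable unions
        intro f hf
        choose D hDc hDm using hf
        refine ⟨⋃ n, D n, Set.countable_iUnion hDc, ?_⟩
        have hU : (⋃ n, f n) \ ((⋃ n, D n) + B) ⊆ ⋃ n, f n \ (D n + B) := by
          rintro x ⟨hx1, hx2⟩
          obtain ⟨n, hn⟩ := Set.mem_iUnion.1 hx1
          refine Set.mem_iUnion.2 ⟨n, hn, fun hxn => hx2 ?_⟩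
          obtain ⟨d, hd, y, hy, rfl⟩ := Set.mem_add.1 hxn
          exact Set.mem_add.2 ⟨d, Set.mem_iUnion.2 ⟨n, hd⟩, y, hy, rfl⟩
        exact hsub _ (hunion _ hDm) _ hU
      · -- Borel base
        rintro A ⟨D, hDc, hAD⟩
        obtain ⟨Z, hZmeas, hZsub, hZI⟩ := hbase _ hAD
        refine ⟨(D + B) ∪ Z, (aux_add_measurable hDc hBmeas).union hZmeas, ?_, D, hDc, ?_⟩
        · intro x hx
          by_cases h : x ∈ D + B
          · exact Or.inl h
          · exact Or.inr (hZsub ⟨hx, h⟩)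
        · refine hsub _ hZI _ ?_
          intro x ⟨hx1, hx2⟩
          rcases hx1 with h | h
          · exact absurd h hx2
          · exact h
      · -- proper
        rintro ⟨D, hDc, hD⟩
        rw [Set.diff_eq, Set.univ_inter] at hD
        exact hno D hDc hD
      · -- translation invariance
        rintro A ⟨D, hDc, hAD⟩ x
        refine ⟨(fun a => x + a) '' D, hDc.image _, ?_⟩
        have hinj : Function.Injective (fun a : X => x + a) := add_right_injective x
        have : (fun a => x + a) '' A \ ((fun a => x + a) '' D + B)
            = (fun a => x + a) '' (A \ (D + B)) := by
          rw [Set.image_diff hinj, aux_image_add_add]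
        rw [this]
        exact htrans _ hAD x
    have hEq : I = J := hmax J hJcand hIJ
    have hBJ : B ∈ J := by
      refine ⟨{0}, Set.countable_singleton _, ?_⟩
      have : ({0} : Set X) + B = B := by
        rw [Set.singleton_add]; simp
      rw [this, Set.diff_self]; exact hempty
    rw [← hEq] at hBJ
    exact hBI hBJ
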